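/- Let α : ℕ → ℕ with α(n) ≥ 1 and let 0 < δ < 1 be such that n/(w·α(n)) > 1 for all sufficiently large n and all w ∈ (1−δ, 1+δ). Assume moreover α(n)/n → 0 as n → ∞. Then for every w ∈ (1−δ, 1+δ), lim_{n→∞} α(n)·x'_{n,α}(w)/x_{n,α}(w) = −1/w. -/

import Mathlib

open Filter Topology

private lemma L0 (k : ℕ) (y : ℝ) :
    (y - 1) * ∑ j ∈ Finset.Icc 1 k, y ^ j = y ^ (k+1) - y := by
  induction k with
  | zero => simp
  | succ k ih =>
    rw [Finset.sum_Icc_succ_top (by omega), mul_add, ih]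
    ring

private lemma L1 (k : ℕ) (y : ℝ) (hy : 1 ≤ y) :
    (∑ j ∈ Finset.Icc 1 k, ((k:ℝ) - j) * y ^ j) * (y - 1) ≤ ∑ j ∈ Finset.Icc 1 k, y ^ j := by
  induction k with
  | zero => simp
  | succ k ih =>
    have hD : ∑ j ∈ Finset.Icc 1 (k+1), (((k:ℕ)+1 : ℝ) - j) * y ^ j
        = (∑ j ∈ Finset.Icc 1 k, ((k:ℝ) - j) * y ^ j) + ∑ j ∈ Finset.Icc 1 k, y ^ j := by
      rw [Finset.sum_Icc_succ_top (by omega), ← Finset.sum_add_distrib]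
      push_cast
      rw [show (((k:ℝ)+1) - ((k:ℝ)+1)) * y ^ (k+1) = 0 by ring, add_zero]
      exact Finset.sum_congr rfl fun j _ => by ring
    have e0 := L0 k y
    have hS : ∑ j ∈ Finset.Icc 1 (k+1), y ^ j = (∑ j ∈ Finset.Icc 1 k, y ^ j) + y ^ (k+1) :=
      Finset.sum_Icc_succ_top (by omega) _
    push_cast at hD ⊢
    rw [hD, hS]
    nlinarith [ih, e0, hy]

private lemma aux_deriv (k n : ℕ) (w : ℝ) (hw0 : 0 < w) (hk : 1 ≤ k) (hn : 1 ≤ n)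
    (f : ℝ → ℝ)
    (hf : ∀ u : ℝ, 0 < u → 0 < f u ∧ ∑ j ∈ Finset.Icc 1 k, f u ^ j = (n:ℝ)/u) :
    HasDerivAt f ((∑ j ∈ Finset.Icc 1 k, (j:ℝ) * f w ^ (j-1))⁻¹ * -((n:ℝ)/w^2)) w := by
  have hn0 : (0:ℝ) < n := by exact_mod_cast hn
  set y := f w with hy_def
  have hy0 : 0 < y := (hf w hw0).1
  have hS : ∑ j ∈ Finset.Icc 1 k, y ^ j = (n:ℝ)/w := (hf w hw0).2
  set F : ℝ → ℝ := fun t => ∑ j ∈ Finset.Icc 1 k, t ^ j with hF_def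
  set F' : ℝ := ∑ j ∈ Finset.Icc 1 k, (j:ℝ) * y ^ (j-1) with hF'_def
  have hF'pos : 0 < F' := by
    apply Finset.sum_pos' (fun j hj => by positivity)
    exact ⟨1, Finset.mem_Icc.mpr ⟨le_refl 1, hk⟩, by simpa using zero_lt_one⟩
  have hmono : StrictMonoOn F (Set.Ici 0) := by
    intro a ha b hb hab
    apply Finset.sum_lt_sum_of_nonempty (by simp [hk])
    intro j hj
    exact pow_lt_pow_left₀ hab ha (by have := (Finset.mem_Icc.mp hj).1; omega)
  have hcancel : ∀ u : ℝ, u ≠ 0 → (n:ℝ) / ((n:ℝ)/u) = u := fun u hu => by field_simp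
  -- continuity of f at w
  have hcx : ContinuousAt f w := by
    rw [Metric.continuousAt_iff]
    intro ε hε
    set m := min (ε/2) (y/2) with hm_def
    have hm0 : 0 < m := by positivity
    have hmy : m < y := by
      have : m ≤ y/2 := min_le_right _ _
      linarith
    have ha0 : (0:ℝ) ≤ y - m := by linarith
    have haS : F (y - m) < (n:ℝ)/w := by
      rw [← hS]; exact hmono (Set.mem_Ici.mpr ha0) (Set.mem_Ici.mpr hy0.le) (by linarith)
    have hbS : (n:ℝ)/w < F (y + m) := by
      rw [← hS]; exact hmono (Set.mem_Ici.mpr hy0.le) (Set.mem_Ici.mpr (by linarith)) (by linarith)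
    have h2 : Tendsto (fun u : ℝ => (n:ℝ)/u) (𝓝 w) (𝓝 ((n:ℝ)/w)) :=
      tendsto_const_nhds.div tendsto_id hw0.ne'
    have hev : ∀ᶠ u in 𝓝 w, 0 < u ∧ F (y - m) < (n:ℝ)/u ∧ (n:ℝ)/u < F (y + m) :=
      (eventually_gt_nhds hw0).and ((h2.eventually (eventually_gt_nhds haS)).and
        (h2.eventually (eventually_lt_nhds hbS)))
    rw [Metric.eventually_nhds_iff] at hev
    obtain ⟨d, hd0, hd⟩ := hev
    refine ⟨d, hd0, fun {u} hu => ?_⟩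
    obtain ⟨hu0, hlo, hhi⟩ := hd hu
    have hfu0 : 0 < f u := (hf u hu0).1
    have hFfu : F (f u) = (n:ℝ)/u := (hf u hu0).2
    have h1 : y - m < f u := by
      by_contra h
      push_neg at h
      have := hmono.le_iff_le (Set.mem_Ici.mpr hfu0.le) (Set.mem_Ici.mpr ha0) |>.mpr h
      rw [hFfu] at this; linarith
    have h2' : f u < y + m := by
      by_contra h
      push_neg at h
      have := hmono.le_iff_le (Set.mem_Ici.mpr (by linarith : (0:ℝ) ≤ y + m))
        (Set.mem_Ici.mpr hfu0.le) |>.mpr h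
      rw [hFfu] at this; linarith
    have hmε : m < ε := lt_of_le_of_lt (min_le_left _ _) (by linarith)
    rw [Real.dist_eq, abs_lt]
    constructor <;> linarith
  -- local inverse
  set u₀ : ℝ := (n:ℝ)/w with hu₀_def
  have hu₀ : 0 < u₀ := div_pos hn0 hw0
  set g : ℝ → ℝ := fun u => f ((n:ℝ)/u) with hg_def
  have hgu : g u₀ = y := by
    simp only [hg_def, hu₀_def, hcancel w hw0.ne']
    exact hy_def.symm
  have hFy : HasDerivAt F F' y := by
    apply HasDerivAt.fun_sum
    intro j hj
    exact hasDerivAt_pow j y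
  have hgc : ContinuousAt g u₀ := by
    have h1 : ContinuousAt (fun u : ℝ => (n:ℝ)/u) u₀ :=
      continuousAt_const.div continuousAt_id hu₀.ne'
    have h2 : (n:ℝ)/u₀ = w := by rw [hu₀_def, hcancel w hw0.ne']
    exact (h2 ▸ hcx : ContinuousAt f ((n:ℝ)/u₀)).comp h1
  have hfg : ∀ᶠ u in 𝓝 u₀, F (g u) = u := by
    filter_upwards [eventually_gt_nhds hu₀] with u hu
    have := (hf ((n:ℝ)/u) (div_pos hn0 hu)).2
    simpa [hg_def, F, hcancel u hu.ne'] using this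
  have hg' : HasDerivAt g F'⁻¹ u₀ :=
    HasDerivAt.of_local_left_inverse hgc (hgu ▸ hFy) hF'pos.ne' hfg
  have hdiv : HasDerivAt (fun u : ℝ => (n:ℝ)/u) (-((n:ℝ)/w^2)) w := by
    have h := (hasDerivAt_inv hw0.ne').const_mul (n:ℝ)
    simpa [div_eq_mul_inv, mul_neg] using h
  have hcomp : HasDerivAt (g ∘ (fun w' : ℝ => (n:ℝ)/w')) (F'⁻¹ * -((n:ℝ)/w^2)) w :=
    HasDerivAt.comp w hg' hdiv
  have heq : f =ᶠ[𝓝 w] (g ∘ (fun w' : ℝ => (n:ℝ)/w')) := by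
    filter_upwards [eventually_gt_nhds hw0] with u hu
    simp only [Function.comp, hg_def, hcancel u hu.ne']
  exact hcomp.congr_of_eventuallyEq heq

private lemma aux_main (k n : ℕ) (w : ℝ) (hw0 : 0 < w) (hk : 1 ≤ k) (hn : 1 ≤ n)
    (hbig : 1 < (n:ℝ)/(w * k))
    (f : ℝ → ℝ)
    (hf : ∀ u : ℝ, 0 < u → 0 < f u ∧ ∑ j ∈ Finset.Icc 1 k, f u ^ j = (n:ℝ)/u) :
    ((k:ℝ) * deriv f w / f w =
      (-1/w) / ((∑ j ∈ Finset.Icc 1 k, (j:ℝ) * f w ^ j) /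
        ((k:ℝ) * ∑ j ∈ Finset.Icc 1 k, f w ^ j)))
    ∧ 1 - (Real.log ((n:ℝ)/(w*k)))⁻¹ ≤
        (∑ j ∈ Finset.Icc 1 k, (j:ℝ) * f w ^ j) / ((k:ℝ) * ∑ j ∈ Finset.Icc 1 k, f w ^ j)
    ∧ (∑ j ∈ Finset.Icc 1 k, (j:ℝ) * f w ^ j) / ((k:ℝ) * ∑ j ∈ Finset.Icc 1 k, f w ^ j) ≤ 1 := by
  have hn0 : (0:ℝ) < n := by exact_mod_cast hn
  have hk0 : (0:ℝ) < k := by exact_mod_cast hk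
  set y := f w with hy_def
  have hy0 : 0 < y := (hf w hw0).1
  have hS : ∑ j ∈ Finset.Icc 1 k, y ^ j = (n:ℝ)/w := (hf w hw0).2
  set S : ℝ := ∑ j ∈ Finset.Icc 1 k, y ^ j with hS_def
  set T : ℝ := ∑ j ∈ Finset.Icc 1 k, (j:ℝ) * y ^ j with hT_def
  have hSpos : 0 < S := by rw [hS]; positivity
  have hkS : (k:ℝ) < S := by
    rw [hS]
    rw [lt_div_iff₀ (by positivity)] at hbig
    rw [lt_div_iff₀ hw0]
    nlinarith
  -- y > 1
  have hy1 : 1 < y := by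
    by_contra h
    push_neg at h
    have : S ≤ (k:ℝ) := by
      rw [hS_def]
      calc ∑ j ∈ Finset.Icc 1 k, y ^ j ≤ ∑ j ∈ Finset.Icc 1 k, (1:ℝ) :=
            Finset.sum_le_sum fun j hj => pow_le_one₀ hy0.le h
        _ = (k:ℝ) := by simp
    linarith
  -- y^k ≥ n/(wk)
  have hyk : (n:ℝ)/(w*k) ≤ y ^ k := by
    have hSk : S ≤ (k:ℝ) * y ^ k := by
      rw [hS_def]
      calc ∑ j ∈ Finset.Icc 1 k, y ^ j ≤ ∑ j ∈ Finset.Icc 1 k, y ^ k :=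
            Finset.sum_le_sum fun j hj =>
              pow_le_pow_right₀ hy1.le (Finset.mem_Icc.mp hj).2
        _ = (k:ℝ) * y ^ k := by simp [mul_comm]
    rw [div_le_iff₀ (by positivity)]
    rw [hS] at hSk
    rw [div_le_iff₀ hw0] at hSk
    nlinarith
  -- log bound : L ≤ k (y - 1)
  set L : ℝ := Real.log ((n:ℝ)/(w*k)) with hL_def
  have hL0 : 0 < L := Real.log_pos hbig
  have hLk : L ≤ (k:ℝ) * (y - 1) := by
    calc L ≤ Real.log (y ^ k) := Real.log_le_log (by positivity) hyk
      _ = (k:ℝ) * Real.log y := by rw [Real.log_pow]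
      _ ≤ (k:ℝ) * (y - 1) := by
          have := Real.log_le_sub_one_of_pos hy0
          nlinarith
  -- T ≤ k S
  have hTkS : T ≤ (k:ℝ) * S := by
    rw [hT_def, hS_def, Finset.mul_sum]
    apply Finset.sum_le_sum
    intro j hj
    have hjk : (j:ℝ) ≤ (k:ℝ) := by exact_mod_cast (Finset.mem_Icc.mp hj).2
    have : (0:ℝ) ≤ y ^ j := by positivity
    nlinarith
  -- T > 0
  have hTpos : 0 < T := by
    rw [hT_def]
    apply Finset.sum_pos' (fun j hj => by positivity)
    refine ⟨1, Finset.mem_Icc.mpr ⟨le_refl 1, hk⟩, by simpa using hy0⟩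
  -- D = kS - T
  have hD : (k:ℝ) * S - T = ∑ j ∈ Finset.Icc 1 k, ((k:ℝ) - j) * y ^ j := by
    rw [hT_def, hS_def, Finset.mul_sum, ← Finset.sum_sub_distrib]
    exact Finset.sum_congr rfl fun j _ => by ring
  have hDle : ((k:ℝ) * S - T) * (y - 1) ≤ S := by rw [hD, hS_def]; exact L1 k y hy1.le
  -- kS - T ≤ L⁻¹ * (k S)
  have hkey : (k:ℝ) * S - T ≤ L⁻¹ * ((k:ℝ) * S) := by
    have h1 : (k:ℝ) * S - T ≤ S / (y - 1) := by
      rw [le_div_iff₀ (by linarith)]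
      exact hDle
    have h2 : S / (y - 1) ≤ L⁻¹ * ((k:ℝ) * S) := by
      rw [div_le_iff₀ (by linarith), inv_mul_eq_div, div_mul_eq_mul_div, le_div_iff₀ hL0]
      calc S * L ≤ S * ((k:ℝ) * (y-1)) := by nlinarith
        _ = (k:ℝ) * S * (y - 1) := by ring
    linarith
  have hkSpos : 0 < (k:ℝ) * S := by positivity
  refine ⟨?_, ?_, ?_⟩
  · -- the equality
    have hd := aux_deriv k n w hw0 hk hn f hf
    rw [hd.deriv]
    set F' : ℝ := ∑ j ∈ Finset.Icc 1 k, (j:ℝ) * f w ^ (j-1) with hF'_def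
    have hF'pos : 0 < F' := by
      rw [hF'_def]
      apply Finset.sum_pos' (fun j hj => by rw [← hy_def]; positivity)
      refine ⟨1, Finset.mem_Icc.mpr ⟨le_refl 1, hk⟩, by simp⟩
    have hT' : y * F' = T := by
      rw [hF'_def, hT_def, Finset.mul_sum]
      apply Finset.sum_congr rfl
      intro j hj
      have hj1 : 1 ≤ j := (Finset.mem_Icc.mp hj).1
      rw [← hy_def]
      rw [show y * ((j:ℝ) * y ^ (j-1)) = (j:ℝ) * (y ^ (j-1) * y) by ring,
        ← pow_succ, Nat.sub_add_cancel hj1]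
    have hyn : y ≠ 0 := hy0.ne'
    have hTn : T ≠ 0 := hTpos.ne'
    have hF'n : F' ≠ 0 := hF'pos.ne'
    have hnw : (n:ℝ) = S * w := by rw [hS]; field_simp
    rw [hnw]
    field_simp
    linear_combination hT'
  · rw [le_div_iff₀ hkSpos]
    nlinarith
  · rw [div_le_one hkSpos]
    nlinarith

theorem stmt_11 (α : ℕ → ℕ) (hα : ∀ n, 1 ≤ α n)
    (δ : ℝ) (hδ0 : 0 < δ) (hδ1 : δ < 1)
    (hbig : ∀ᶠ n : ℕ in atTop, ∀ w ∈ Set.Ioo (1 - δ) (1 + δ),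
      1 < (n : ℝ) / (w * α n))
    (hαn : Tendsto (fun n : ℕ => (α n : ℝ) / n) atTop (nhds 0))
    (x : ℕ → ℝ → ℝ)
    (hx : ∀ n, 1 ≤ n → ∀ w : ℝ, 0 < w →
      0 < x n w ∧ ∑ j ∈ Finset.Icc 1 (α n), x n w ^ j = (n : ℝ) / w) :
    ∀ w ∈ Set.Ioo (1 - δ) (1 + δ),
      Tendsto (fun n : ℕ => (α n : ℝ) * deriv (x n) w / x n w) atTop
        (nhds (-1 / w)) := by
  intro w hw
  obtain ⟨hw1, hw2⟩ := hw
  have hw0 : 0 < w := by linarith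
  set r : ℕ → ℝ := fun n =>
    (∑ j ∈ Finset.Icc 1 (α n), (j:ℝ) * x n w ^ j) /
      ((α n : ℝ) * ∑ j ∈ Finset.Icc 1 (α n), x n w ^ j) with hr_def
  set L : ℕ → ℝ := fun n => Real.log ((n:ℝ)/(w * α n)) with hL_def
  -- n/(w α n) → ∞
  have hpos : ∀ᶠ n : ℕ in atTop, (α n : ℝ)/n ∈ Set.Ioi (0:ℝ) := by
    filter_upwards [eventually_ge_atTop 1] with n hn
    have h1 : (0:ℝ) < α n := by exact_mod_cast hα n
    have h2 : (0:ℝ) < n := by exact_mod_cast hn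
    exact Set.mem_Ioi.mpr (div_pos h1 h2)
  have h0 : Tendsto (fun n : ℕ => (α n : ℝ)/n) atTop (𝓝[>] 0) :=
    tendsto_nhdsWithin_iff.mpr ⟨hαn, hpos⟩
  have hratio : Tendsto (fun n : ℕ => (n:ℝ)/(w * α n)) atTop atTop := by
    have h := (tendsto_inv_nhdsGT_zero.comp h0).atTop_div_const hw0
    refine h.congr fun n => ?_
    simp only [Function.comp_apply, inv_div, div_div]
    rw [mul_comm]
  have hLtop : Tendsto L atTop atTop := Real.tendsto_log_atTop.comp hratio
  have hLinv : Tendsto (fun n => (L n)⁻¹) atTop (𝓝 0) := hLtop.inv_tendsto_atTop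
  have hlow : Tendsto (fun n => 1 - (L n)⁻¹) atTop (𝓝 1) := by
    have h := Tendsto.sub (tendsto_const_nhds : Tendsto (fun _ : ℕ => (1:ℝ)) atTop (𝓝 1)) hLinv
    simpa using h
  -- the key eventual facts
  have hkey : ∀ᶠ n : ℕ in atTop,
      ((α n : ℝ) * deriv (x n) w / x n w = (-1/w) / r n)
      ∧ 1 - (L n)⁻¹ ≤ r n ∧ r n ≤ 1 := by
    filter_upwards [hbig, eventually_ge_atTop 1] with n hb hn
    have := aux_main (α n) n w hw0 (hα n) hn (hb w ⟨hw1, hw2⟩) (x n) (hx n hn)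
    exact this
  have hr : Tendsto r atTop (𝓝 1) := by
    refine tendsto_of_tendsto_of_tendsto_of_le_of_le' hlow tendsto_const_nhds ?_ ?_
    · filter_upwards [hkey] with n h; exact h.2.1
    · filter_upwards [hkey] with n h; exact h.2.2
  have hfin : Tendsto (fun n => (-1/w) / r n) atTop (𝓝 ((-1/w)/1)) :=
    tendsto_const_nhds.div hr one_ne_zero
  rw [div_one] at hfin
  refine hfin.congr' ?_
  filter_upwards [hkey] with n h
  exact h.1.symm
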